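/- Let 0 < β < 1, θ ≥ 0, σ > 0, γ > 0, π ≥ 0, δ > 0, ρ > 0, c₀ > 0, z₀ > 0, and set δ* := δ(1−β+θ)/(1−β), z̄ := ((δ*+π)/(βγ))^{1/(1−β)}, z(t) := z̄z₀/[(z̄^{1−β}−z₀^{1−β})e^{−((1−β)(δ*+π)/β)t}+z₀^{1−β}]^{1/(1−β)}, and c(t) := c₀z₀^{β/σ}e^{−((ρ−δ*)/σ)t}z(t)^{−β/σ}. Then for all t ≥ 0, c'(t)/c(t) = [(δ−ρ)(1−β)+δθ]/(σ(1−β)) − (β/σ)·z'(t)/z(t), and c'(t)/c(t) tends to [(δ−ρ)(1−β)+δθ]/(σ(1−β)) as t → ∞. -/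

import Mathlib

open Filter

/-- Along the second closed-form solution of the Lucas-Uzawa model with
externalities, the growth rate of consumption equals
[(δ-ρ)(1-β)+δθ]/(σ(1-β)) - (β/σ)z'/z, and converges to its
balanced-growth-path value [(δ-ρ)(1-β)+δθ]/(σ(1-β)). -/
theorem c_growth_rate (β θ σ γ pi δ ρ c0 z0 : ℝ)
    (hβ0 : 0 < β) (hβ1 : β < 1) (hθ : 0 ≤ θ) (hσ : 0 < σ) (hγ : 0 < γ)
    (hpi : 0 ≤ pi) (hδ : 0 < δ) (hρ : 0 < ρ) (hc0 : 0 < c0) (hz0 : 0 < z0)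
    (δs zbar : ℝ)
    (hδs : δs = δ * (1 - β + θ) / (1 - β))
    (hzbar : zbar = ((δs + pi) / (β * γ)) ^ (1 / (1 - β)))
    (z c : ℝ → ℝ)
    (hz : ∀ t, z t = zbar * z0 /
      ((zbar ^ (1 - β) - z0 ^ (1 - β)) * Real.exp (-((1 - β) * (δs + pi) / β) * t)
        + z0 ^ (1 - β)) ^ (1 / (1 - β)))
    (hc : ∀ t, c t = c0 * z0 ^ (β / σ) * Real.exp (-((ρ - δs) / σ) * t)
      * z t ^ (-(β / σ))) :
    (∀ t ≥ (0:ℝ), deriv c t / c t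
      = ((δ - ρ) * (1 - β) + δ * θ) / (σ * (1 - β)) - β / σ * (deriv z t / z t)) ∧
    Tendsto (fun t => deriv c t / c t) atTop
      (nhds (((δ - ρ) * (1 - β) + δ * θ) / (σ * (1 - β)))) := by
  have h1β : (0:ℝ) < 1 - β := by linarith
  have hδs_pos : 0 < δs := by
    rw [hδs]; positivity
  set a : ℝ := (1 - β) * (δs + pi) / β with ha
  set A : ℝ := zbar ^ (1 - β) - z0 ^ (1 - β) with hA
  set B : ℝ := z0 ^ (1 - β) with hB
  set p : ℝ := -(1 / (1 - β)) with hp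
  set C : ℝ := zbar * z0 with hC
  set D : ℝ → ℝ := fun t => A * Real.exp (-a * t) + B with hD
  set G : ℝ := ((δ - ρ) * (1 - β) + δ * θ) / (σ * (1 - β)) with hG
  have hzbar_pos : 0 < zbar := by
    rw [hzbar]
    exact Real.rpow_pos_of_pos (div_pos (by linarith) (mul_pos hβ0 hγ)) _
  have hZb : 0 < zbar ^ (1 - β) := Real.rpow_pos_of_pos hzbar_pos _
  have hBpos : 0 < B := Real.rpow_pos_of_pos hz0 _
  have hCpos : 0 < C := mul_pos hzbar_pos hz0
  have hapos : 0 < a := by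
    rw [ha]; positivity
  have hGval : G = (δs - ρ) / σ := by
    rw [hG, hδs]
    field_simp
    ring
  -- D positive for t ≥ 0
  have hDpos : ∀ t : ℝ, 0 ≤ t → 0 < D t := by
    intro t ht
    have he1 : Real.exp (-a * t) ≤ 1 := Real.exp_le_one_iff.mpr (by nlinarith)
    have he0 : 0 < Real.exp (-a * t) := Real.exp_pos _
    have : D t = (zbar ^ (1 - β) - B) * Real.exp (-a * t) + B := rfl
    nlinarith [mul_pos hZb he0, mul_nonneg hBpos.le (sub_nonneg.mpr he1)]
  have hDcont : Continuous D := by fun_prop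
  have hUopen : IsOpen {t : ℝ | 0 < D t} := isOpen_lt continuous_const hDcont
  -- key pointwise computation
  have key : ∀ t : ℝ, 0 < D t →
      deriv z t / z t = p * (A * Real.exp (-a * t) * (-a)) / D t ∧
      deriv c t / c t = G - β / σ * (deriv z t / z t) := by
    intro t ht
    have hDne : D t ≠ 0 := ne_of_gt ht
    -- derivative of D
    have hDd : HasDerivAt D (A * Real.exp (-a * t) * (-a)) t := by
      have h1 : HasDerivAt (fun s : ℝ => -a * s) (-a * 1) t := (hasDerivAt_id t).const_mul (-a)
      have h2 := (h1.exp.const_mul A).add_const B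
      refine h2.congr_deriv ?_
      ring
    -- z agrees with the rpow formula near t
    have hzf : z =ᶠ[nhds t] fun s => C * D s ^ p := by
      filter_upwards [hUopen.mem_nhds ht] with s hs
      rw [hz s, hp, Real.rpow_neg (le_of_lt hs), div_eq_mul_inv]
    have hfd : HasDerivAt (fun s => C * D s ^ p)
        (C * (A * Real.exp (-a * t) * (-a) * p * D t ^ (p - 1))) t :=
      (hDd.rpow_const (Or.inl hDne)).const_mul C
    have hzd : HasDerivAt z (C * (A * Real.exp (-a * t) * (-a) * p * D t ^ (p - 1))) t :=
      hfd.congr_of_eventuallyEq hzf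
    have hzt : z t = C * D t ^ p := hzf.self_of_nhds
    have hztpos : 0 < z t := by
      rw [hzt]; exact mul_pos hCpos (Real.rpow_pos_of_pos ht _)
    have hDp : 0 < D t ^ p := Real.rpow_pos_of_pos ht _
    have hDp1 : D t ^ (p - 1) = D t ^ p / D t := Real.rpow_sub_one hDne p
    have hratio : deriv z t / z t = p * (A * Real.exp (-a * t) * (-a)) / D t := by
      rw [hzd.deriv, hzt, hDp1]
      field_simp
    refine ⟨hratio, ?_⟩
    -- derivative of c
    set q : ℝ := -(β / σ) with hq
    set b : ℝ := (ρ - δs) / σ with hb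
    set K : ℝ := c0 * z0 ^ (β / σ) with hK
    have hKpos : 0 < K := mul_pos hc0 (Real.rpow_pos_of_pos hz0 _)
    have hcf : c = fun s => K * Real.exp (-b * s) * z s ^ q := funext fun s => hc s
    have hed : HasDerivAt (fun s : ℝ => K * Real.exp (-b * s)) (K * Real.exp (-b * t) * (-b)) t := by
      have h1 : HasDerivAt (fun s : ℝ => -b * s) (-b) t := by
        simpa using (hasDerivAt_id t).const_mul (-b)
      simpa [mul_assoc] using h1.exp.const_mul K
    have hzq : HasDerivAt (fun s => z s ^ q)
        (C * (A * Real.exp (-a * t) * (-a) * p * D t ^ (p - 1)) * q * z t ^ (q - 1)) t :=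
      hzd.rpow_const (Or.inl (ne_of_gt hztpos))
    have hcd : HasDerivAt c
        (K * Real.exp (-b * t) * (-b) * z t ^ q +
          K * Real.exp (-b * t) *
            (C * (A * Real.exp (-a * t) * (-a) * p * D t ^ (p - 1)) * q * z t ^ (q - 1))) t := by
      rw [hcf]; exact hed.mul hzq
    have hzq1 : z t ^ (q - 1) = z t ^ q / z t := Real.rpow_sub_one (ne_of_gt hztpos) q
    have hzqpos : 0 < z t ^ q := Real.rpow_pos_of_pos hztpos _
    have hepos : 0 < Real.exp (-b * t) := Real.exp_pos _
    have hct : c t = K * Real.exp (-b * t) * z t ^ q := hc t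
    have hmain : deriv c t / c t = -b + q * (deriv z t / z t) := by
      rw [hcd.deriv, hct, hzq1, ← hzd.deriv]
      field_simp
    rw [hmain, hGval, hq, hb]
    ring
  constructor
  · intro t ht
    exact (key t (hDpos t ht)).2
  · have heq : (fun t => deriv c t / c t) =ᶠ[atTop]
        fun t => G - β / σ * (p * (A * Real.exp (-a * t) * (-a)) / D t) := by
      filter_upwards [eventually_ge_atTop (0:ℝ)] with t ht
      obtain ⟨h1, h2⟩ := key t (hDpos t ht)
      rw [h2, h1]
    rw [tendsto_congr' heq]
    have hE : Tendsto (fun t : ℝ => Real.exp (-a * t)) atTop (nhds 0) := by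
      have h1 : Tendsto (fun t : ℝ => a * t) atTop atTop :=
        Tendsto.const_mul_atTop hapos tendsto_id
      have h2 := Real.tendsto_exp_neg_atTop_nhds_zero.comp h1
      simpa [Function.comp_def, neg_mul] using h2
    have hnum : Tendsto (fun t : ℝ => p * (A * Real.exp (-a * t) * (-a)))
        atTop (nhds (p * (A * 0 * (-a)))) := by
      exact (tendsto_const_nhds.mul ((tendsto_const_nhds.mul hE).mul tendsto_const_nhds))
    have hden : Tendsto D atTop (nhds (A * 0 + B)) :=
      (tendsto_const_nhds.mul hE).add tendsto_const_nhds
    have h : Tendsto (fun t => G - β / σ * (p * (A * Real.exp (-a * t) * (-a)) / D t)) atTop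
        (nhds (G - β / σ * (p * (A * 0 * (-a)) / (A * 0 + B)))) :=
      tendsto_const_nhds.sub
        (tendsto_const_nhds.mul (hnum.div hden (by simpa using ne_of_gt hBpos)))
    have : G - β / σ * (p * (A * 0 * (-a)) / (A * 0 + B)) = G := by
      simp
    rw [this] at h
    exact h
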